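/- Let g, h be nonzero generalized power series in A[[t^G]] (A an integral domain, G an ordered abelian group) and λ ∈ G with v(gh) < λ. Then there exist a natural number l, elements λ_0 < λ_1 < ... < λ_l and δ_1 > δ_2 > ... > δ_l of G such that the truncation of the product satisfies (gh)(λ) = ∑_{i=1}^{l} g[λ_{i-1}, λ_i[ · h(δ_i). Moreover the sequences can be chosen so that λ_l ≤ λ - v(h) and δ_1 ≤ λ - v(g). -/

import Mathlib

/-- The open truncation `f(β) = ∑_{γ < β} a_γ t^γ` of a generalized power series. -/
noncomputable def truncLT {Γ A : Type*} [AddCommGroup Γ] [LinearOrder Γ] [IsOrderedAddMonoid Γ] [CommRing A]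
    (f : HahnSeries Γ A) (β : Γ) : HahnSeries Γ A where
  coeff γ := if γ < β then f.coeff γ else 0
  isPWO_support' := f.isPWO_support.mono (fun γ hγ => by
    by_cases h : γ < β
    · simpa [Function.mem_support, h] using hγ
    · simp [Function.mem_support, h] at hγ)

section Aux

variable {Γ A : Type*} [AddCommGroup Γ] [LinearOrder Γ] [IsOrderedAddMonoid Γ] [CommRing A]

lemma truncLT_coeff (f : HahnSeries Γ A) (β γ : Γ) :
    (truncLT f β).coeff γ = if γ < β then f.coeff γ else 0 := rfl

lemma truncLT_support_subset (f : HahnSeries Γ A) (β : Γ) :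
    (truncLT f β).support ⊆ f.support := by
  intro γ hγ
  rw [HahnSeries.mem_support, truncLT_coeff] at hγ
  rw [HahnSeries.mem_support]
  by_cases h : γ < β
  · rw [if_pos h] at hγ; exact hγ
  · rw [if_neg h] at hγ; exact absurd rfl hγ

/-- Multiplication coefficient formula with enlarged supports. -/
lemma mul_coeff_subset' (x y : HahnSeries Γ A) {s t : Set Γ}
    (hs : s.IsPWO) (ht : t.IsPWO) (hxs : x.support ⊆ s) (hyt : y.support ⊆ t) (a : Γ) :
    (x * y).coeff a =
      ∑ ij ∈ Finset.addAntidiagonal hs ht a, x.coeff ij.1 * y.coeff ij.2 := by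
  rw [HahnSeries.coeff_mul]
  refine Finset.sum_subset ?_ ?_
  · exact (Finset.addAntidiagonal_mono_left (hu := x.isPWO_support) hxs).trans
      (Finset.addAntidiagonal_mono_right (hu := y.isPWO_support) hyt)
  · intro ij hij hij'
    rw [Finset.addAntidiagonal, Finset.mem_antidiagonal] at hij
    rw [Finset.mem_antidiagonal] at hij'
    by_cases h1 : x.coeff ij.1 = 0
    · rw [h1, zero_mul]
    · by_cases h2 : y.coeff ij.2 = 0
      · rw [h2, mul_zero]
      · exact absurd ⟨h1, h2, hij.2.2⟩ hij'

end Aux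

/-- Let `g`, `h` be nonzero generalized power series and `λ ∈ Γ` with
`v(gh) < λ`. Then there are `l : ℕ`, `λ₀ < λ₁ < ⋯ < λ_l` and `δ₁ > ⋯ > δ_l` in `Γ` such that
`(gh)(λ) = ∑_{i=1}^{l} g[λ_{i-1}, λ_i[ · h(δ_i)`, where `g[λ_{i-1},λ_i[ = g(λ_i) - g(λ_{i-1})`.
Moreover the sequences can be chosen with `λ_l ≤ λ - v(h)` and `δ₁ ≤ λ - v(g)`. -/
theorem stmt8 {Γ A : Type*} [AddCommGroup Γ] [LinearOrder Γ] [IsOrderedAddMonoid Γ] [CommRing A] [IsDomain A]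
    (g h : HahnSeries Γ A) (hg : g ≠ 0) (hh : h ≠ 0)
    (lam : Γ) (hlt : (g * h).order < lam) :
    ∃ (l : ℕ) (lam' : Fin (l + 1) → Γ) (del : Fin l → Γ),
      StrictMono lam' ∧ StrictAnti del ∧
      (∀ i, lam' i ≤ lam - h.order) ∧
      (∀ i, del i ≤ lam - g.order) ∧
      truncLT (g * h) lam =
        ∑ i : Fin l,
          (truncLT g (lam' i.succ) - truncLT g (lam' i.castSucc)) * truncLT h (del i) := by
  classical
  have hordsum : g.order + h.order < lam := by
    rwa [HahnSeries.order_mul hg hh] at hlt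
  have hgo : g.order < lam - h.order := lt_sub_iff_add_lt.2 hordsum
  set c : Γ := lam - g.order with hc
  -- the cut function
  set dfun : Γ → Γ := fun a =>
    if hne : (h.support ∩ Set.Ici (lam - a)).Nonempty
    then min c ((h.isWF_support.mono Set.inter_subset_left).min hne) else c with hdfun
  have dfun_le : ∀ a, dfun a ≤ c := by
    intro a
    simp only [hdfun]
    split_ifs
    · exact min_le_left _ _
    · exact le_rfl
  have dfun_ge : ∀ a, g.order ≤ a → lam - a ≤ dfun a := by
    intro a ha
    have hca : lam - a ≤ c := sub_le_sub_left ha lam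
    simp only [hdfun]
    split_ifs with hne
    · refine le_min hca ?_
      exact ((h.isWF_support.mono Set.inter_subset_left).min_mem hne).2
    · exact hca
  have dfun_anti : Antitone dfun := by
    intro a a' haa'
    by_cases hne : (h.support ∩ Set.Ici (lam - a)).Nonempty
    · have hsub : h.support ∩ Set.Ici (lam - a) ⊆ h.support ∩ Set.Ici (lam - a') :=
        Set.inter_subset_inter_right _ (Set.Ici_subset_Ici.2 (sub_le_sub_left haa' lam))
      have hne' : (h.support ∩ Set.Ici (lam - a')).Nonempty := hne.mono hsub
      have hmle : (h.isWF_support.mono Set.inter_subset_left).min hne' ≤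
          (h.isWF_support.mono Set.inter_subset_left).min hne :=
        Set.IsWF.min_le _ _ (hsub ((h.isWF_support.mono Set.inter_subset_left).min_mem hne))
      simp only [hdfun]
      rw [dif_pos hne, dif_pos hne']
      exact min_le_min_left c hmle
    · calc dfun a' ≤ c := dfun_le a'
        _ = dfun a := by simp only [hdfun]; rw [dif_neg hne]
  have dfun_lt_iff : ∀ a, g.order ≤ a → ∀ b ∈ h.support, (b < dfun a ↔ b < lam - a) := by
    intro a ha b hb
    constructor
    · intro hbd
      by_contra hnb
      push_neg at hnb
      have hbmem : b ∈ h.support ∩ Set.Ici (lam - a) := ⟨hb, hnb⟩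
      have hne : (h.support ∩ Set.Ici (lam - a)).Nonempty := ⟨b, hbmem⟩
      have : dfun a ≤ b := by
        simp only [hdfun]
        rw [dif_pos hne]
        exact le_trans (min_le_right _ _) (Set.IsWF.min_le _ _ hbmem)
      exact absurd hbd (not_lt.2 this)
    · intro hbl
      exact lt_of_lt_of_le hbl (dfun_ge a ha)
  -- the domain
  set dom : Set Γ := g.support ∩ Set.Iio (lam - h.order) with hdom
  have domWF : dom.IsWF := g.isWF_support.mono Set.inter_subset_left
  have hgod : g.order ∈ dom :=
    ⟨(HahnSeries.mem_support g _).2 (HahnSeries.coeff_order_eq_zero.not.2 hg), hgo⟩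
  -- the image of dfun on dom is finite
  have himg_sub : dfun '' dom ⊆ h.support ∪ {c} := by
    rintro _ ⟨a, -, rfl⟩
    simp only [hdfun]
    split_ifs with hne
    · rcases le_total c ((h.isWF_support.mono Set.inter_subset_left).min hne) with hcm | hcm
      · right; simp [min_eq_left hcm]
      · left
        rw [min_eq_right hcm]
        exact ((h.isWF_support.mono Set.inter_subset_left).min_mem hne).1
    · right; rfl
  have himg_wf : (h.support ∪ {c} : Set Γ).IsWF :=
    h.isWF_support.union (Set.finite_singleton c).isWF
  have himg : (dfun '' dom).Finite := by
    rw [← Set.not_infinite]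
    intro hinf
    set f : ℕ → Γ := fun n => ((Set.Infinite.natEmbedding (dfun '' dom) hinf n : Γ)) with hf
    have hinj : Function.Injective f := fun m n hmn =>
      (Set.Infinite.natEmbedding (dfun '' dom) hinf).injective (Subtype.coe_injective hmn)
    have hmem : ∀ n, f n ∈ dfun '' dom :=
      fun n => (Set.Infinite.natEmbedding (dfun '' dom) hinf n).2
    obtain ⟨φ, hφ⟩ := ((himg_wf.isPWO).mono himg_sub).exists_monotone_subseq hmem
    have hy : StrictMono (f ∘ φ) :=
      hφ.strictMono_of_injective (hinj.comp φ.injective)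
    -- pick preimages
    choose x hx1 hx2 using fun n => hmem (φ n)
    have hxanti : StrictAnti x := by
      apply strictAnti_nat_of_succ_lt
      intro n
      by_contra hcon
      push_neg at hcon
      have := dfun_anti hcon
      rw [hx2 n, hx2 (n + 1)] at this
      exact absurd (hy (Nat.lt_succ_self n)) (not_lt.2 this)
    rw [Set.isWF_iff_no_descending_seq] at domWF
    exact domWF x hxanti (fun n => hx1 n)
  have himgne : (dfun '' dom).Nonempty := ⟨_, Set.mem_image_of_mem dfun hgod⟩
  -- enumerate the image in decreasing order
  set K := himg.toFinset.card with hKdef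
  have hKpos : 0 < K :=
    Finset.card_pos.2 ⟨_, himg.mem_toFinset.2 himgne.choose_spec⟩
  set e := himg.toFinset.orderIsoOfFin rfl with he
  set ds : Fin K → Γ := fun i => (e i.rev : Γ) with hds
  have hds_mem : ∀ i, ds i ∈ dfun '' dom := fun i => himg.mem_toFinset.1 (e i.rev).2
  have hds_anti : StrictAnti ds := by
    intro i j hij
    exact Subtype.coe_lt_coe.2 (e.strictMono (Fin.rev_lt_rev.2 hij))
  have hds_surj : ∀ d ∈ dfun '' dom, ∃ i, ds i = d := by
    intro d hd
    refine ⟨(e.symm ⟨d, himg.mem_toFinset.2 hd⟩).rev, ?_⟩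
    rw [hds]
    simp [Fin.rev_rev]
  -- block minima
  have wfT : ∀ i : Fin K, {a | a ∈ dom ∧ dfun a ≤ ds i}.IsWF :=
    fun _ => (g.isWF_support.mono Set.inter_subset_left).mono (fun a ha => ha.1)
  have neT : ∀ i : Fin K, {a | a ∈ dom ∧ dfun a ≤ ds i}.Nonempty := by
    intro i
    obtain ⟨a0, ha0, ha0d⟩ := hds_mem i
    exact ⟨a0, ha0, le_of_eq ha0d⟩
  set mint : Fin K → Γ := fun i => (wfT i).min (neT i) with hmint
  have mint_mem : ∀ i, mint i ∈ dom ∧ dfun (mint i) ≤ ds i := fun i => (wfT i).min_mem (neT i)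
  have mint_min : ∀ i, ∀ a, a ∈ dom → dfun a ≤ ds i → mint i ≤ a :=
    fun i a ha hd => (wfT i).min_le (neT i) ⟨ha, hd⟩
  have dfun_mint : ∀ i, dfun (mint i) = ds i := by
    intro i
    obtain ⟨a0, ha0, ha0d⟩ := hds_mem i
    refine le_antisymm (mint_mem i).2 ?_
    rw [← ha0d]
    exact dfun_anti (mint_min i a0 ha0 (le_of_eq ha0d))
  have mint_le_iff : ∀ i, ∀ a, a ∈ dom → (mint i ≤ a ↔ dfun a ≤ ds i) := by
    intro i a ha
    constructor
    · intro hle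
      rw [← dfun_mint i]
      exact dfun_anti hle
    · exact mint_min i a ha
  -- the partition points
  set lam' : Fin (K + 1) → Γ :=
    fun i => if hi : (i : ℕ) < K then mint ⟨i, hi⟩ else lam - h.order with hlam'
  have lam'_castSucc : ∀ i : Fin K, lam' i.castSucc = mint i := by
    intro i
    simp only [hlam', Fin.coe_castSucc, i.isLt, dif_pos]
  have lam'_lt_iff : ∀ i : Fin (K + 1), (hi : (i : ℕ) < K) → lam' i = mint ⟨i, hi⟩ := by
    intro i hi
    simp only [hlam', hi, dif_pos]
  have lam'_last : ∀ i : Fin (K + 1), ¬ ((i : ℕ) < K) → lam' i = lam - h.order := by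
    intro i hi
    simp only [hlam', hi, dif_neg, not_false_iff]
  have lam'_le : ∀ i, lam' i ≤ lam - h.order := by
    intro i
    simp only [hlam']
    split_ifs with hi
    · exact le_of_lt (mint_mem ⟨i, hi⟩).1.2
    · exact le_rfl
  have mint_mono : ∀ i j : Fin K, i < j → mint i < mint j := by
    intro i j hij
    by_contra hcon
    push_neg at hcon
    have h1 : dfun (mint i) ≤ ds j := (mint_le_iff j (mint i) (mint_mem i).1).1 hcon
    rw [dfun_mint i] at h1
    exact absurd (hds_anti hij) (not_lt.2 h1)
  have lam'_mono : StrictMono lam' := by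
    intro i j hij
    by_cases hj : (j : ℕ) < K
    · have hi : (i : ℕ) < K := lt_trans (Fin.lt_iff_val_lt_val.1 hij) hj
      rw [lam'_lt_iff i hi, lam'_lt_iff j hj]
      exact mint_mono _ _ (Fin.mk_lt_mk.2 (Fin.lt_iff_val_lt_val.1 hij))
    · have hi : (i : ℕ) < K := by
        have h1 := Fin.lt_iff_val_lt_val.1 hij
        have h2 : (j : ℕ) < K + 1 := j.isLt
        omega
      rw [lam'_lt_iff i hi, lam'_last j hj]
      exact (mint_mem ⟨i, hi⟩).1.2
  have ds_le : ∀ i, ds i ≤ lam - g.order := by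
    intro i
    obtain ⟨a0, -, ha0d⟩ := hds_mem i
    rw [← ha0d]
    exact dfun_le a0
  refine ⟨K, lam', ds, lam'_mono, hds_anti, lam'_le, ds_le, ?_⟩
  -- the main identity
  apply HahnSeries.coeff_inj.1
  funext γ
  have hGsupp : ∀ i : Fin K,
      (truncLT g (lam' i.succ) - truncLT g (lam' i.castSucc)).support ⊆ g.support := by
    intro i a ha
    rw [HahnSeries.mem_support, HahnSeries.coeff_sub, truncLT_coeff, truncLT_coeff] at ha
    rw [HahnSeries.mem_support]
    intro hz
    rw [hz] at ha
    simp at ha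
  have hsum : (∑ i : Fin K,
      (truncLT g (lam' i.succ) - truncLT g (lam' i.castSucc)) * truncLT h (ds i)).coeff γ =
      ∑ i : Fin K,
        ((truncLT g (lam' i.succ) - truncLT g (lam' i.castSucc)) * truncLT h (ds i)).coeff γ :=
    map_sum (HahnSeries.coeff.addMonoidHom γ) _ _
  rw [hsum]
  have hterm : ∀ i : Fin K,
      ((truncLT g (lam' i.succ) - truncLT g (lam' i.castSucc)) * truncLT h (ds i)).coeff γ =
      ∑ ij ∈ Finset.addAntidiagonal g.isPWO_support h.isPWO_support γ,
        (truncLT g (lam' i.succ) - truncLT g (lam' i.castSucc)).coeff ij.1 *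
          (truncLT h (ds i)).coeff ij.2 := fun i =>
    mul_coeff_subset' _ _ g.isPWO_support h.isPWO_support (hGsupp i)
      (truncLT_support_subset h (ds i)) γ
  simp only [hterm]
  rw [Finset.sum_comm]
  have hlhs : (truncLT (g * h) lam).coeff γ =
      ∑ ij ∈ Finset.addAntidiagonal g.isPWO_support h.isPWO_support γ,
        (if ij.1 + ij.2 < lam then g.coeff ij.1 * h.coeff ij.2 else 0) := by
    rw [truncLT_coeff]
    by_cases hγ : γ < lam
    · rw [if_pos hγ, HahnSeries.coeff_mul]
      refine Finset.sum_congr rfl ?_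
      intro ij hij
      rw [Finset.addAntidiagonal, Finset.mem_antidiagonal] at hij
      rw [if_pos (hij.2.2 ▸ hγ)]
    · rw [if_neg hγ]
      refine (Finset.sum_eq_zero ?_).symm
      intro ij hij
      rw [Finset.addAntidiagonal, Finset.mem_antidiagonal] at hij
      rw [if_neg (hij.2.2 ▸ hγ)]
  rw [hlhs]
  refine Finset.sum_congr rfl ?_
  intro ij hij
  rw [Finset.addAntidiagonal, Finset.mem_antidiagonal] at hij
  obtain ⟨ha, hb, -⟩ := hij
  have hbord : h.order ≤ ij.2 := HahnSeries.order_le_of_coeff_ne_zero hb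
  have hgord : g.order ≤ ij.1 := HahnSeries.order_le_of_coeff_ne_zero ha
  -- rewrite each summand as an indicator
  have hGind : ∀ i : Fin K,
      (truncLT g (lam' i.succ) - truncLT g (lam' i.castSucc)).coeff ij.1 =
      if lam' i.castSucc ≤ ij.1 ∧ ij.1 < lam' i.succ then g.coeff ij.1 else 0 := by
    intro i
    rw [HahnSeries.coeff_sub, truncLT_coeff, truncLT_coeff]
    have hcs : lam' i.castSucc < lam' i.succ := lam'_mono Fin.castSucc_lt_succ
    rcases lt_or_ge ij.1 (lam' i.castSucc) with h1 | h1
    · rw [if_pos h1, if_pos (lt_trans h1 hcs), if_neg (by simp [not_le.2 h1]), sub_self]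
    · by_cases h2 : ij.1 < lam' i.succ
      · rw [if_pos h2, if_neg (not_lt.2 h1), if_pos ⟨h1, h2⟩, sub_zero]
      · rw [if_neg h2, if_neg (not_lt.2 h1), if_neg (by simp [h2]), sub_zero]
  simp only [hGind]
  by_cases hB : ij.1 < lam - h.order
  · -- ij.1 is in the domain, find its block
    have hadom : ij.1 ∈ dom := ⟨ha, hB⟩
    have hdfa : dfun ij.1 ∈ dfun '' dom := Set.mem_image_of_mem dfun hadom
    obtain ⟨j0, hj0⟩ := hds_surj _ hdfa
    have hex : ∃ i0 : Fin K, lam' i0.castSucc ≤ ij.1 ∧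
        ∀ i : Fin K, lam' i.castSucc ≤ ij.1 → i ≤ i0 := by
      have hzero : lam' ((⟨0, hKpos⟩ : Fin K)).castSucc ≤ ij.1 := by
        rw [lam'_castSucc]
        refine mint_min _ ij.1 hadom ?_
        rw [← hj0]
        exact hds_anti.antitone (Fin.mk_le_mk.2 (Nat.zero_le _))
      have hsne : (Finset.univ.filter
          (fun i : Fin K => lam' i.castSucc ≤ ij.1)).Nonempty :=
        ⟨⟨0, hKpos⟩, Finset.mem_filter.2 ⟨Finset.mem_univ _, hzero⟩⟩
      refine ⟨_, (Finset.mem_filter.1 (Finset.max'_mem _ hsne)).2, fun i hi => ?_⟩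
      exact Finset.le_max' _ i (Finset.mem_filter.2 ⟨Finset.mem_univ _, hi⟩)
    obtain ⟨i0, hi0cs, hi0max⟩ := hex
    have hi0succ : ij.1 < lam' i0.succ := by
      by_cases hK1 : (i0 : ℕ) + 1 < K
      · have hsucc_eq : lam' i0.succ = mint ⟨(i0 : ℕ) + 1, hK1⟩ := by
          have hv : ((i0.succ : Fin (K + 1)) : ℕ) = (i0 : ℕ) + 1 := Fin.val_succ i0
          rw [lam'_lt_iff i0.succ (hv ▸ hK1)]
        by_contra hcon
        push_neg at hcon
        rw [hsucc_eq] at hcon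
        have hcs' : lam' ((⟨(i0 : ℕ) + 1, hK1⟩ : Fin K)).castSucc ≤ ij.1 := by
          rw [lam'_castSucc]
          exact hcon
        have hle' := hi0max _ hcs'
        have : (i0 : ℕ) + 1 ≤ (i0 : ℕ) := hle'
        omega
      · have heq : lam' i0.succ = lam - h.order := by
          refine lam'_last _ ?_
          rw [Fin.val_succ]
          omega
        rw [heq]
        exact hB
    have hblock : dfun ij.1 = ds i0 := by
      have h1 : dfun ij.1 ≤ ds i0 := by
        rw [lam'_castSucc] at hi0cs
        exact (mint_le_iff i0 ij.1 hadom).1 hi0cs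
      have h2 : i0 ≤ j0 := (hds_anti.le_iff_ge).1 (hj0 ▸ h1)
      have h3 : j0 ≤ i0 := by
        by_contra hcon
        push_neg at hcon
        by_cases hK1 : (i0 : ℕ) + 1 < K
        · have hj0ge : (⟨(i0 : ℕ) + 1, hK1⟩ : Fin K) ≤ j0 := by
            rw [Fin.mk_le_mk]
            have hvv : (i0 : ℕ) < (j0 : ℕ) := hcon
            omega
          have hda : dfun ij.1 ≤ ds ⟨(i0 : ℕ) + 1, hK1⟩ := by
            rw [← hj0]
            exact hds_anti.antitone hj0ge
          have hma : mint ⟨(i0 : ℕ) + 1, hK1⟩ ≤ ij.1 := (mint_le_iff _ ij.1 hadom).2 hda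
          have hsucc_eq : lam' i0.succ = mint ⟨(i0 : ℕ) + 1, hK1⟩ := by
            have hv : ((i0.succ : Fin (K + 1)) : ℕ) = (i0 : ℕ) + 1 := Fin.val_succ i0
            rw [lam'_lt_iff i0.succ (hv ▸ hK1)]
          rw [hsucc_eq] at hi0succ
          exact absurd hma (not_le.2 hi0succ)
        · have hjlt : (j0 : ℕ) < K := j0.isLt
          have hvv : (i0 : ℕ) < (j0 : ℕ) := hcon
          omega
      rw [← hj0, le_antisymm h3 h2]
    have hbiff : ij.2 < ds i0 ↔ ij.1 + ij.2 < lam := by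
      rw [← hblock, dfun_lt_iff ij.1 hgord ij.2 hb]
      constructor
      · intro hx
        have hy := add_lt_add_left hx ij.1
        rwa [sub_add_cancel, add_comm] at hy
      · intro hx
        rw [lt_sub_iff_add_lt, add_comm]
        exact hx
    have hside : ∀ i ∈ (Finset.univ : Finset (Fin K)), i ≠ i0 →
        (if lam' i.castSucc ≤ ij.1 ∧ ij.1 < lam' i.succ then g.coeff ij.1 else 0) *
          (truncLT h (ds i)).coeff ij.2 = 0 := by
      intro i _ hi
      rcases lt_or_gt_of_ne hi with hlt' | hlt'
      · have hle2 : lam' i.succ ≤ lam' i0.castSucc := by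
          refine lam'_mono.monotone ?_
          rw [Fin.le_def, Fin.val_succ, Fin.coe_castSucc]
          exact hlt'
        rw [if_neg, zero_mul]
        rintro ⟨-, h2⟩
        exact absurd (lt_of_lt_of_le h2 (le_trans hle2 hi0cs)) (lt_irrefl ij.1)
      · have hle2 : lam' i0.succ ≤ lam' i.castSucc := by
          refine lam'_mono.monotone ?_
          rw [Fin.le_def, Fin.val_succ, Fin.coe_castSucc]
          exact hlt'
        rw [if_neg, zero_mul]
        rintro ⟨h1, -⟩
        exact absurd (lt_of_lt_of_le hi0succ (le_trans hle2 h1)) (lt_irrefl ij.1)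
    rw [Finset.sum_eq_single_of_mem i0 (Finset.mem_univ i0) hside,
      if_pos (show lam' i0.castSucc ≤ ij.1 ∧ ij.1 < lam' i0.succ from ⟨hi0cs, hi0succ⟩),
      truncLT_coeff]
    by_cases hab : ij.1 + ij.2 < lam
    · rw [if_pos hab, if_pos (hbiff.2 hab)]
    · rw [if_neg hab, if_neg (fun hx => hab (hbiff.1 hx)), mul_zero]
  · push_neg at hB
    have hab : ¬ ij.1 + ij.2 < lam := by
      push_neg
      calc lam = lam - h.order + h.order := by rw [sub_add_cancel]
        _ ≤ ij.1 + ij.2 := add_le_add hB hbord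
    rw [if_neg hab]
    refine (Finset.sum_eq_zero ?_).symm
    intro i _
    rw [if_neg, zero_mul]
    rintro ⟨-, h2⟩
    exact absurd (lt_of_lt_of_le h2 (le_trans (lam'_le i.succ) hB)) (lt_irrefl ij.1)
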